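/- Let L be a linear subspace of ℝ^n and L^⊥ its orthogonal complement. Then the maximum support index sets cover all indices: J(L) ∪ J(L^⊥) = {1,...,n}. That is, for every index j ∈ {1,...,n}, either some x ∈ L ∩ ℝ^n_+ has x_j > 0 or some s ∈ L^⊥ ∩ ℝ^n_+ has s_j > 0. -/

import Mathlib

noncomputable section

open Finset
open scoped InnerProductSpace

open Finset

/-- Carathéodory for cones: any nonnegative combination over `S` equals a nonnegative
combination over a subset with linearly independent vectors. -/
lemma cone_caratheodory {E : Type*} [AddCommGroup E] [Module ℝ E] {ι : Type*} [Fintype ι]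
    (v : ι → E) :
    ∀ (S : Finset ι) (c : ι → ℝ), (∀ i, 0 ≤ c i) →
      ∃ T : Finset ι, LinearIndependent ℝ (fun i : T => v (i : ι)) ∧
        ∃ d : ι → ℝ, (∀ i, 0 ≤ d i) ∧ ∑ i ∈ T, d i • v i = ∑ i ∈ S, c i • v i := by
  classical
  intro S
  induction S using Finset.strongInductionOn with
  | _ S ih =>
    intro c hc
    by_cases hli : LinearIndependent ℝ (fun i : S => v (i : ι))
    · exact ⟨S, hli, c, hc, rfl⟩
    · obtain ⟨g, hgsum, i₁, hgi₁⟩ := Fintype.not_linearIndependent_iff.mp hli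
      have key : ∀ G : ι → ℝ, (∑ i ∈ S, G i • v i = 0) → (∃ i₀ ∈ S, 0 < G i₀) →
          ∃ T : Finset ι, LinearIndependent ℝ (fun i : T => v (i : ι)) ∧
            ∃ d : ι → ℝ, (∀ i, 0 ≤ d i) ∧ ∑ i ∈ T, d i • v i = ∑ i ∈ S, c i • v i := by
        intro G hGsum ⟨i₀', hi₀'S, hGi₀'⟩
        set P : Finset ι := S.filter (fun i => 0 < G i) with hP
        have hPne : P.Nonempty := ⟨i₀', by simp [hP, hi₀'S, hGi₀']⟩
        obtain ⟨i₀, hi₀P, hmin⟩ := P.exists_min_image (fun i => c i / G i) hPne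
        have hi₀S : i₀ ∈ S := (Finset.mem_filter.mp hi₀P).1
        have hGi₀ : 0 < G i₀ := (Finset.mem_filter.mp hi₀P).2
        set t : ℝ := c i₀ / G i₀ with ht
        have ht0 : 0 ≤ t := div_nonneg (hc i₀) hGi₀.le
        set c' : ι → ℝ := fun i => if i ∈ S then c i - t * G i else 0 with hc'def
        have hc' : ∀ i, 0 ≤ c' i := by
          intro i
          simp only [hc'def]
          split
          · rename_i hiS
            by_cases hGi : 0 < G i
            · have hiP : i ∈ P := Finset.mem_filter.mpr ⟨hiS, hGi⟩
              have := hmin i hiP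
              have : t * G i ≤ c i := by
                rw [ht] at this ⊢
                calc c i₀ / G i₀ * G i ≤ c i / G i * G i := by
                      exact mul_le_mul_of_nonneg_right this hGi.le
                  _ = c i := div_mul_cancel₀ _ (ne_of_gt hGi)
              linarith
            · push_neg at hGi
              have : t * G i ≤ 0 := mul_nonpos_of_nonneg_of_nonpos ht0 hGi
              have := hc i
              linarith
          · exact le_refl 0
        have hc'i₀ : c' i₀ = 0 := by
          simp only [hc'def, if_pos hi₀S, ht]
          field_simp
          ring
        have hsum' : ∑ i ∈ S, c' i • v i = ∑ i ∈ S, c i • v i := by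
          have : ∀ i ∈ S, c' i • v i = c i • v i - t • (G i • v i) := by
            intro i hiS
            simp only [hc'def, if_pos hiS, sub_smul, smul_smul]
          rw [Finset.sum_congr rfl this, Finset.sum_sub_distrib, ← Finset.smul_sum, hGsum,
            smul_zero, sub_zero]
        have herase : ∑ i ∈ S.erase i₀, c' i • v i = ∑ i ∈ S, c i • v i := by
          rw [← hsum']
          exact Finset.sum_erase _ (by rw [hc'i₀, zero_smul])
        obtain ⟨T, hT, d, hd, hdsum⟩ :=
          ih (S.erase i₀) (Finset.erase_ssubset hi₀S) c' hc'
        exact ⟨T, hT, d, hd, hdsum.trans herase⟩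
      have huniv : ∀ (h : ↥S → ℝ), ∑ i : ↥S, h i • v (i : ι) = ∑ i ∈ S.attach, h i • v (i : ι) := by
        intro h; rw [Finset.univ_eq_attach]
      rcases lt_or_gt_of_ne hgi₁ with hneg | hpos
      · refine key (fun i => if h : i ∈ S then -g ⟨i, h⟩ else 0) ?_ ⟨i₁, i₁.2, by simp [hneg]⟩
        calc ∑ i ∈ S, (if h : i ∈ S then -g ⟨i, h⟩ else 0) • v i
            = ∑ i ∈ S.attach, (if h : (i : ι) ∈ S then -g ⟨i, h⟩ else 0) • v (i : ι) :=
              (Finset.sum_attach S _).symm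
          _ = ∑ i ∈ S.attach, -(g i • v (i : ι)) := by
              refine Finset.sum_congr rfl fun i _ => ?_
              rw [dif_pos i.2, neg_smul]
          _ = 0 := by
              rw [Finset.sum_neg_distrib, ← huniv, hgsum, neg_zero]
      · refine key (fun i => if h : i ∈ S then g ⟨i, h⟩ else 0) ?_ ⟨i₁, i₁.2, by simp [hpos]⟩
        calc ∑ i ∈ S, (if h : i ∈ S then g ⟨i, h⟩ else 0) • v i
            = ∑ i ∈ S.attach, (if h : (i : ι) ∈ S then g ⟨i, h⟩ else 0) • v (i : ι) :=
              (Finset.sum_attach S _).symm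
          _ = ∑ i ∈ S.attach, g i • v (i : ι) := by
              refine Finset.sum_congr rfl fun i _ => ?_
              rw [dif_pos i.2]
          _ = 0 := by rw [← huniv, hgsum]

/-- The cone of nonnegative combinations of finitely many vectors is closed. -/
lemma isClosed_nonnegSpan {E : Type*} [NormedAddCommGroup E] [NormedSpace ℝ E]
    [FiniteDimensional ℝ E] {ι : Type*} [Fintype ι] (v : ι → E) :
    IsClosed {x : E | ∃ c : ι → ℝ, (∀ i, 0 ≤ c i) ∧ x = ∑ i, c i • v i} := by
  classical
  have hAT : ∀ T : Finset ι, LinearIndependent ℝ (fun i : T => v (i : ι)) →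
      IsClosed {x : E | ∃ d : ι → ℝ, (∀ i, 0 ≤ d i) ∧ x = ∑ i ∈ T, d i • v i} := by
    intro T hT
    let φ : (T → ℝ) →ₗ[ℝ] E :=
      { toFun := fun d => ∑ i : T, d i • v (i : ι)
        map_add' := by intro a b; simp [add_smul, Finset.sum_add_distrib]
        map_smul' := by intro a b; simp [smul_smul, Finset.smul_sum] }
    have hker : LinearMap.ker φ = ⊥ := by
      rw [LinearMap.ker_eq_bot']
      intro d hd
      funext i
      exact Fintype.linearIndependent_iff.mp hT d hd i
    have hce := LinearMap.isClosedEmbedding_of_injective (f := φ) hker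
    have himg : {x : E | ∃ d : ι → ℝ, (∀ i, 0 ≤ d i) ∧ x = ∑ i ∈ T, d i • v i}
        = φ '' {d : T → ℝ | ∀ i, 0 ≤ d i} := by
      ext x
      constructor
      · rintro ⟨d, hd, rfl⟩
        refine ⟨fun i => d i, fun i => hd i, ?_⟩
        show (∑ i : T, d i • v (i : ι)) = _
        rw [Finset.univ_eq_attach, Finset.sum_attach T (fun i => d i • v i)]
      · rintro ⟨d, hd, rfl⟩
        refine ⟨fun i => if h : i ∈ T then d ⟨i, h⟩ else 0, ?_, ?_⟩
        · intro i; dsimp only; split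
          · exact hd _
          · exact le_refl 0
        · show (∑ i : T, d i • v (i : ι))
              = ∑ i ∈ T, (if h : i ∈ T then d ⟨i, h⟩ else 0) • v i
          rw [Finset.univ_eq_attach,
            ← Finset.sum_attach T (fun i => (if h : i ∈ T then d ⟨i, h⟩ else 0) • v i)]
          exact Finset.sum_congr rfl fun i _ => by rw [dif_pos i.2]
    rw [himg]
    refine hce.isClosedMap _ ?_
    have : {d : T → ℝ | ∀ i, 0 ≤ d i} = ⋂ i, {d : T → ℝ | 0 ≤ d i} := by
      ext d; simp [Set.mem_iInter]
    rw [this]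
    exact isClosed_iInter fun i => isClosed_le continuous_const (continuous_apply i)
  have hdecomp : {x : E | ∃ c : ι → ℝ, (∀ i, 0 ≤ c i) ∧ x = ∑ i, c i • v i}
      = ⋃ (T : {T : Finset ι // LinearIndependent ℝ (fun i : T => v (i : ι))}),
          {x : E | ∃ d : ι → ℝ, (∀ i, 0 ≤ d i) ∧ x = ∑ i ∈ (T : Finset ι), d i • v i} := by
    ext x
    constructor
    · rintro ⟨c, hc, rfl⟩
      obtain ⟨T, hT, d, hd, hsum⟩ := cone_caratheodory v Finset.univ c hc
      exact Set.mem_iUnion.mpr ⟨⟨T, hT⟩, d, hd, hsum.symm⟩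
    · intro hx
      obtain ⟨⟨T, hT⟩, d, hd, hxe⟩ := Set.mem_iUnion.mp hx
      have hsum : ∑ i ∈ (Finset.univ : Finset ι), (if i ∈ T then d i else 0) • v i
          = ∑ i ∈ T, d i • v i := by
        rw [← Finset.sum_subset (Finset.subset_univ T)
          (fun i _ hi => by rw [if_neg hi, zero_smul])]
        exact Finset.sum_congr rfl fun i hi => by rw [if_pos hi]
      refine ⟨fun i => if i ∈ T then d i else 0, fun i => ?_, ?_⟩
      · by_cases h : i ∈ T <;> simp [h, hd i]
      · rw [hxe]; exact hsum.symm
  rw [hdecomp]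
  exact isClosed_iUnion_of_finite fun T => hAT T.1 T.2

/-- The maximum support index set `J(S)` of a set `S ⊆ ℝⁿ`:
indices `j` such that `x_j > 0` for some nonnegative `x ∈ S`. -/
def maxSupport {n : ℕ} (S : Set (Fin n → ℝ)) : Set (Fin n) :=
  {j | ∃ x ∈ S, (∀ k, 0 ≤ x k) ∧ 0 < x j}

/-- The orthogonal complement `L^⊥ = {s : ⟨s,x⟩ = 0 for all x ∈ L}`. -/
def perpSet {n : ℕ} (L : Set (Fin n → ℝ)) : Set (Fin n → ℝ) :=
  {s | ∀ x ∈ L, ∑ j, s j * x j = 0}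

/-- The maximum support index sets of `L` and `L^⊥` cover all indices. -/
theorem maxSupport_union_maxSupport_perp_eq_univ {n : ℕ}
    (L : Submodule ℝ (Fin n → ℝ)) :
    maxSupport (L : Set (Fin n → ℝ)) ∪ maxSupport (perpSet (L : Set (Fin n → ℝ))) = Set.univ := by
  classical
  rw [Set.eq_univ_iff_forall]
  intro j
  by_cases hj : j ∈ maxSupport (L : Set (Fin n → ℝ))
  · exact Or.inl hj
  refine Or.inr ?_
  obtain ⟨s, hs⟩ := IsNoetherian.noetherian L
  set v : ((↥s ⊕ ↥s) ⊕ Fin n) → (Fin n → ℝ) :=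
    Sum.elim (Sum.elim (fun i => (i : Fin n → ℝ)) (fun i => -(i : Fin n → ℝ)))
      (fun k => Pi.single k 1) with hv
  have hsingle : ∀ y : Fin n → ℝ, ∑ k, y k • (Pi.single k (1:ℝ) : Fin n → ℝ) = y := by
    intro y
    funext m
    rw [Finset.sum_apply]
    simp [Pi.single_apply]
  have hmemL : ∀ i : ↥s, (i : Fin n → ℝ) ∈ L := fun i => hs ▸ Submodule.subset_span i.2
  have hCD : {z : Fin n → ℝ | ∃ c : ((↥s ⊕ ↥s) ⊕ Fin n) → ℝ,
        (∀ i, 0 ≤ c i) ∧ z = ∑ i, c i • v i}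
      = {z : Fin n → ℝ | ∃ x ∈ L, ∃ y : Fin n → ℝ, (∀ k, 0 ≤ y k) ∧ z = x + y} := by
    ext z
    constructor
    · rintro ⟨c, hc, rfl⟩
      refine ⟨∑ i : ↥s, c (Sum.inl (Sum.inl i)) • (i : Fin n → ℝ)
          + ∑ i : ↥s, c (Sum.inl (Sum.inr i)) • (-(i : Fin n → ℝ)), ?_,
          fun m => c (Sum.inr m), fun m => hc _, ?_⟩
      · refine Submodule.add_mem L ?_ ?_
        · exact Submodule.sum_mem L fun i _ => Submodule.smul_mem L _ (hmemL i)
        · exact Submodule.sum_mem L fun i _ =>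
            Submodule.smul_mem L _ (Submodule.neg_mem L (hmemL i))
      · rw [Fintype.sum_sum_type, Fintype.sum_sum_type]
        simp only [hv, Sum.elim_inl, Sum.elim_inr]
        rw [hsingle (fun m => c (Sum.inr m))]
    · rintro ⟨x, hx, y, hy, rfl⟩
      rw [← hs] at hx
      obtain ⟨f, -, hf⟩ := Submodule.mem_span_finset.mp hx
      refine ⟨Sum.elim (Sum.elim (fun i => max (f (i : Fin n → ℝ)) 0)
          (fun i => max (-(f (i : Fin n → ℝ))) 0)) (fun k => y k), ?_, ?_⟩
      · rintro ((i | i) | k) <;> simp [le_max_right, hy]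
      · have h1 : ∑ i : ↥s, (max (f (i : Fin n → ℝ)) 0) • (i : Fin n → ℝ)
            + ∑ i : ↥s, (max (-(f (i : Fin n → ℝ))) 0) • (-(i : Fin n → ℝ)) = x := by
          rw [← Finset.sum_add_distrib]
          have heach : ∀ i : ↥s, (max (f (i : Fin n → ℝ)) 0) • (i : Fin n → ℝ)
              + (max (-(f (i : Fin n → ℝ))) 0) • (-(i : Fin n → ℝ))
              = f (i : Fin n → ℝ) • (i : Fin n → ℝ) := by
            intro i
            rw [smul_neg, ← sub_eq_add_neg, ← sub_smul, max_zero_sub_max_neg_zero_eq_self]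
          rw [Finset.sum_congr rfl fun i _ => heach i, ← hf, Finset.univ_eq_attach,
            Finset.sum_attach s (fun i => f i • i)]
        rw [Fintype.sum_sum_type, Fintype.sum_sum_type]
        simp only [hv, Sum.elim_inl, Sum.elim_inr]
        rw [hsingle y, h1]
  set K : ConvexCone ℝ (EuclideanSpace ℝ (Fin n)) :=
    { carrier := WithLp.ofLp ⁻¹' {z : Fin n → ℝ | ∃ x ∈ L, ∃ y : Fin n → ℝ, (∀ k, 0 ≤ y k) ∧ z = x + y}
      smul_mem' := by
        rintro t ht z ⟨x, hx, y, hy, hz⟩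
        exact ⟨t • x, Submodule.smul_mem L t hx, t • y,
          fun k => mul_nonneg ht.le (hy k), by rw [WithLp.ofLp_smul, hz, smul_add]⟩
      add_mem' := by
        rintro z ⟨x, hx, y, hy, hz⟩ z' ⟨x', hx', y', hy', hz'⟩
        exact ⟨x + x', Submodule.add_mem L hx hx', y + y',
          fun k => add_nonneg (hy k) (hy' k), by rw [WithLp.ofLp_add, hz, hz']; abel⟩ } with hK
  have hKne : (K : Set (EuclideanSpace ℝ (Fin n))).Nonempty :=
    ⟨0, 0, Submodule.zero_mem L, 0, fun k => le_refl 0, by simp⟩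
  have hKclosed : IsClosed (K : Set (EuclideanSpace ℝ (Fin n))) := by
    have h := isClosed_nonnegSpan (E := Fin n → ℝ) v
    rw [hCD] at h
    exact h.preimage (PiLp.continuous_ofLp ..)
  have hbK : (WithLp.toLp 2 (-(Pi.single j 1 : Fin n → ℝ)) : EuclideanSpace ℝ (Fin n)) ∉ K := by
    rintro ⟨x, hx, y, hy, hxy⟩
    have hxy' : (-(Pi.single j (1:ℝ)) : Fin n → ℝ) = x + y := hxy
    have hcoord : ∀ k, -x k = (Pi.single j (1:ℝ) : Fin n → ℝ) k + y k := by
      intro k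
      have h := congrFun hxy' k
      simp only [Pi.neg_apply, Pi.add_apply] at h
      linarith
    refine hj ⟨-x, Submodule.neg_mem L hx, fun k => ?_, ?_⟩
    · have h0 : (0:ℝ) ≤ (Pi.single j (1:ℝ) : Fin n → ℝ) k := by
        rw [Pi.single_apply]; split <;> norm_num
      show 0 ≤ -x k
      linarith [hcoord k, hy k]
    · show 0 < -x j
      have h := hcoord j
      rw [Pi.single_eq_same] at h
      linarith [hy j]
  let C : ProperCone ℝ (EuclideanSpace ℝ (Fin n)) :=
    { carrier := (K : Set (EuclideanSpace ℝ (Fin n)))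
      add_mem' := fun ha hb => K.add_mem ha hb
      zero_mem' := ⟨0, Submodule.zero_mem L, 0, fun k => le_refl 0, by simp⟩
      smul_mem' := by
        rintro ⟨t, ht⟩ z ⟨x, hx, y, hy, hz⟩
        exact ⟨t • x, Submodule.smul_mem L t hx, t • y,
          fun k => mul_nonneg ht (hy k), by rw [← smul_add, ← hz]; rfl⟩
      isClosed' := hKclosed }
  obtain ⟨w, hw1, hw2⟩ :=
    ProperCone.hyperplane_separation' (C := C) hbK
  rw [real_inner_comm] at hw2
  have hinner : ∀ a b : EuclideanSpace ℝ (Fin n), ⟪a, b⟫_ℝ = ∑ i, a i * b i := by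
    intro a b; simp [PiLp.inner_apply, RCLike.inner_apply]
    exact Finset.sum_congr rfl fun i _ => mul_comm _ _
  refine ⟨w, ?_, ?_, ?_⟩
  · intro x hx
    have hxK : (WithLp.toLp 2 x : EuclideanSpace ℝ (Fin n)) ∈ K :=
      ⟨x, hx, 0, fun k => le_refl 0, (add_zero x).symm⟩
    have hxK' : (WithLp.toLp 2 (-x) : EuclideanSpace ℝ (Fin n)) ∈ K :=
      ⟨-x, Submodule.neg_mem L hx, 0, fun k => le_refl 0, (add_zero _).symm⟩
    have h1 := hw1 _ hxK
    have h2 := hw1 _ hxK'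
    rw [hinner] at h1 h2
    simp only [WithLp.ofLp_toLp] at h1 h2
    have hneg : ∑ i, (-x : Fin n → ℝ) i * w i = -∑ i, x i * w i := by
      rw [← Finset.sum_neg_distrib]
      exact Finset.sum_congr rfl fun i _ => by simp
    rw [hneg] at h2
    have h3 : ∑ i, x i * w i = 0 := le_antisymm (by linarith) h1
    rw [← h3]
    exact Finset.sum_congr rfl fun i _ => mul_comm _ _
  · intro k
    have hkK : (WithLp.toLp 2 (Pi.single k 1 : Fin n → ℝ) : EuclideanSpace ℝ (Fin n)) ∈ K := by
      refine ⟨0, Submodule.zero_mem L, Pi.single k 1, fun m => ?_, (zero_add _).symm⟩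
      rw [Pi.single_apply]; split <;> norm_num
    have h := hw1 _ hkK
    rw [hinner] at h
    simpa [Pi.single_apply] using h
  · rw [hinner] at hw2
    simp only [WithLp.ofLp_toLp] at hw2
    have h : ∑ i, w i * (-(Pi.single j 1 : Fin n → ℝ)) i = -w j := by
      simp [Pi.single_apply]
    rw [h] at hw2
    linarith
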